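/- Let p, K, L be positive integers, let a_k, b_k ∈ ℝ and γ_k ∈ ℝ^p with ‖γ_k‖₂ = 1 for k = 1,…,K, and let c_l, d_l ∈ ℝ and γ̃_l ∈ ℝ^p with ‖γ̃_l‖₂ = 1 for l = 1,…,L. If for every symmetric matrix M ∈ ℝ^{p×p}, Σ_{k=1}^{K} (a_k (γ_kᵀMγ_k)² + b_k (γ_kᵀMγ_k)) = Σ_{l=1}^{L} (c_l (γ̃_lᵀMγ̃_l)² + d_l (γ̃_lᵀMγ̃_l)), then Σ_{k=1}^{K} b_k γ_kγ_kᵀ = Σ_{l=1}^{L} d_l γ̃_lγ̃_lᵀ and Σ_{k=1}^{K} a_k γ_kγ_kᵀ = Σ_{l=1}^{L} c_l γ̃_lγ̃_lᵀ. -/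

import Mathlib

open Matrix

/-- The pair of matrix-coefficient identities separating the linear and quadratic parts
in the quadratic case of the identifiability proof. -/
theorem quadratic_case_matrix_identities
    {p K L : ℕ} (hp : 0 < p) (hK : 0 < K) (hL : 0 < L)
    (a b : Fin K → ℝ) (c d : Fin L → ℝ)
    (γ : Fin K → Fin p → ℝ) (γ' : Fin L → Fin p → ℝ)
    (hγu : ∀ k, ∑ i, γ k i ^ 2 = 1) (hγ'u : ∀ l, ∑ i, γ' l i ^ 2 = 1)
    (heq : ∀ M : Matrix (Fin p) (Fin p) ℝ, M.IsSymm →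
      ∑ k, (a k * (γ k ⬝ᵥ M.mulVec (γ k)) ^ 2 + b k * (γ k ⬝ᵥ M.mulVec (γ k))) =
      ∑ l, (c l * (γ' l ⬝ᵥ M.mulVec (γ' l)) ^ 2 + d l * (γ' l ⬝ᵥ M.mulVec (γ' l)))) :
    (∑ k, b k • vecMulVec (γ k) (γ k) = ∑ l, d l • vecMulVec (γ' l) (γ' l)) ∧
    (∑ k, a k • vecMulVec (γ k) (γ k) = ∑ l, c l • vecMulVec (γ' l) (γ' l)) := by
  -- split heq into quadratic and linear parts using M and -M
  have hsplit : ∀ M : Matrix (Fin p) (Fin p) ℝ, M.IsSymm →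
      (∑ k, a k * (γ k ⬝ᵥ M *ᵥ (γ k)) ^ 2 = ∑ l, c l * (γ' l ⬝ᵥ M *ᵥ (γ' l)) ^ 2) ∧
      (∑ k, b k * (γ k ⬝ᵥ M *ᵥ (γ k)) = ∑ l, d l * (γ' l ⬝ᵥ M *ᵥ (γ' l))) := by
    intro M hM
    have h1 := heq M hM
    have h2 := heq (-M) hM.neg
    simp only [neg_mulVec, dotProduct_neg, neg_sq, mul_neg] at h2
    rw [Finset.sum_add_distrib, Finset.sum_add_distrib] at h1
    simp only [← sub_eq_add_neg] at h2
    rw [Finset.sum_sub_distrib, Finset.sum_sub_distrib] at h2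
    constructor <;> linarith
  -- linear identity for the b/d coefficients
  have hB := fun M hM => (hsplit M hM).2
  -- linear identity for the a/c coefficients, via polarization with the identity matrix
  have hA : ∀ M : Matrix (Fin p) (Fin p) ℝ, M.IsSymm →
      ∑ k, a k * (γ k ⬝ᵥ M *ᵥ (γ k)) = ∑ l, c l * (γ' l ⬝ᵥ M *ᵥ (γ' l)) := by
    intro M hM
    have hone : ∀ (v : Fin p → ℝ), (∑ i, v i ^ 2 = 1) →
        v ⬝ᵥ (1 : Matrix (Fin p) (Fin p) ℝ) *ᵥ v = 1 := by
      intro v hv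
      rw [one_mulVec, ← hv]; simp [dotProduct, sq]
    have hplus := (hsplit (1 + M) (Matrix.isSymm_one.add hM)).1
    have hminus := (hsplit (1 + -M) (Matrix.isSymm_one.add hM.neg)).1
    simp only [add_mulVec, dotProduct_add, neg_mulVec, dotProduct_neg] at hplus hminus
    have e1 : ∀ k, γ k ⬝ᵥ (1 : Matrix (Fin p) (Fin p) ℝ) *ᵥ γ k = 1 := fun k => hone _ (hγu k)
    have e2 : ∀ l, γ' l ⬝ᵥ (1 : Matrix (Fin p) (Fin p) ℝ) *ᵥ γ' l = 1 := fun l => hone _ (hγ'u l)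
    simp only [e1, e2] at hplus hminus
    have hq := (hsplit M hM).1
    -- (1 + q)^2 = 1 + 2q + q^2, (1 - q)^2 = 1 - 2q + q^2
    have hp2 : ∑ k, a k * (1 + γ k ⬝ᵥ M *ᵥ γ k)^2
        = ∑ k, a k + 2 * ∑ k, a k * (γ k ⬝ᵥ M *ᵥ γ k) + ∑ k, a k * (γ k ⬝ᵥ M *ᵥ γ k)^2 := by
      rw [Finset.mul_sum, ← Finset.sum_add_distrib, ← Finset.sum_add_distrib]
      exact Finset.sum_congr rfl fun k _ => by ring
    have hp2' : ∑ l, c l * (1 + γ' l ⬝ᵥ M *ᵥ γ' l)^2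
        = ∑ l, c l + 2 * ∑ l, c l * (γ' l ⬝ᵥ M *ᵥ γ' l) + ∑ l, c l * (γ' l ⬝ᵥ M *ᵥ γ' l)^2 := by
      rw [Finset.mul_sum, ← Finset.sum_add_distrib, ← Finset.sum_add_distrib]
      exact Finset.sum_congr rfl fun l _ => by ring
    have hm2 : ∑ k, a k * (1 + -(γ k ⬝ᵥ M *ᵥ γ k))^2
        = ∑ k, a k - 2 * ∑ k, a k * (γ k ⬝ᵥ M *ᵥ γ k) + ∑ k, a k * (γ k ⬝ᵥ M *ᵥ γ k)^2 := by
      calc ∑ k, a k * (1 + -(γ k ⬝ᵥ M *ᵥ γ k))^2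
            = ∑ k, (a k - 2 * (a k * (γ k ⬝ᵥ M *ᵥ γ k)) + a k * (γ k ⬝ᵥ M *ᵥ γ k)^2) :=
              Finset.sum_congr rfl fun k _ => by ring
        _ = _ := by rw [Finset.sum_add_distrib, Finset.sum_sub_distrib, ← Finset.mul_sum]
    have hm2' : ∑ l, c l * (1 + -(γ' l ⬝ᵥ M *ᵥ γ' l))^2
        = ∑ l, c l - 2 * ∑ l, c l * (γ' l ⬝ᵥ M *ᵥ γ' l) + ∑ l, c l * (γ' l ⬝ᵥ M *ᵥ γ' l)^2 := by
      calc ∑ l, c l * (1 + -(γ' l ⬝ᵥ M *ᵥ γ' l))^2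
            = ∑ l, (c l - 2 * (c l * (γ' l ⬝ᵥ M *ᵥ γ' l)) + c l * (γ' l ⬝ᵥ M *ᵥ γ' l)^2) :=
              Finset.sum_congr rfl fun l _ => by ring
        _ = _ := by rw [Finset.sum_add_distrib, Finset.sum_sub_distrib, ← Finset.mul_sum]
    rw [hp2, hp2'] at hplus
    rw [hm2, hm2'] at hminus
    linarith
  -- compute the quadratic form on symmetrized standard basis matrices
  have hstd : ∀ (v : Fin p → ℝ) (i j : Fin p),
      v ⬝ᵥ (single i j (1:ℝ) + (single i j (1:ℝ))ᵀ) *ᵥ v = 2 * (v i * v j) := by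
    intro v i j
    have h1 : v ⬝ᵥ (single i j (1:ℝ)) *ᵥ v = v i * v j := by
      simp [dotProduct, mulVec, single, Finset.mul_sum, mul_ite, ite_mul, ite_and,
        Finset.sum_ite_eq]
    have h2 : v ⬝ᵥ (single i j (1:ℝ))ᵀ *ᵥ v = v i * v j := by
      rw [dotProduct_mulVec, vecMul_transpose, dotProduct_comm, h1]
    rw [add_mulVec, dotProduct_add, h1, h2]; ring
  -- conclude entrywise
  constructor
  · ext i j
    have h := hB (single i j (1:ℝ) + (single i j (1:ℝ))ᵀ)
      (isSymm_add_transpose_self _)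
    simp only [hstd] at h
    simp only [Matrix.sum_apply, Matrix.smul_apply, vecMulVec_apply, smul_eq_mul]
    have h' : 2 * ∑ k, b k * (γ k i * γ k j) = 2 * ∑ l, d l * (γ' l i * γ' l j) := by
      rw [Finset.mul_sum, Finset.mul_sum]
      calc ∑ k, 2 * (b k * (γ k i * γ k j)) = ∑ k, b k * (2 * (γ k i * γ k j)) := by
            exact Finset.sum_congr rfl fun k _ => by ring
        _ = ∑ l, d l * (2 * (γ' l i * γ' l j)) := h
        _ = ∑ l, 2 * (d l * (γ' l i * γ' l j)) := Finset.sum_congr rfl fun l _ => by ring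
    linarith
  · ext i j
    have h := hA (single i j (1:ℝ) + (single i j (1:ℝ))ᵀ)
      (isSymm_add_transpose_self _)
    simp only [hstd] at h
    simp only [Matrix.sum_apply, Matrix.smul_apply, vecMulVec_apply, smul_eq_mul]
    have h' : 2 * ∑ k, a k * (γ k i * γ k j) = 2 * ∑ l, c l * (γ' l i * γ' l j) := by
      rw [Finset.mul_sum, Finset.mul_sum]
      calc ∑ k, 2 * (a k * (γ k i * γ k j)) = ∑ k, a k * (2 * (γ k i * γ k j)) := by
            exact Finset.sum_congr rfl fun k _ => by ring
        _ = ∑ l, c l * (2 * (γ' l i * γ' l j)) := h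
        _ = ∑ l, 2 * (c l * (γ' l i * γ' l j)) := Finset.sum_congr rfl fun l _ => by ring
    linarith
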